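/- In the polynomial ring ℂ[t₁,…,t₉] (with the naming t₁=t_{m²₃,₁}, t₂=t_{m²₃,₂}, t₃=t_{m²₂,₂}, t₄=t_{m²₂,₁}, t₅=t_{m¹₃,₁}, t₆=t_{m¹₃,₂}, t₇=t_{m¹₂,₂}, t₈=t_{m¹₂,₁}, t₉=t_u), the radical of the ideal I = (t₅t₉, t₁t₉, t₄t₅ + t₁t₈, t₁t₅, t₂t₅² − t₁²t₆) equals the intersection of the three prime ideals P₁ = (t₅, t₁), P₂ = (t₉, t₅, t₈, t₆), P₃ = (t₉, t₁, t₄, t₂). -/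

import Mathlib

noncomputable section

open MvPolynomial

/-- The ideal of the miniversal deformation space: with coordinates
`t₁,…,t₉` named `X 0,…,X 8`, `I = (t₅t₉, t₁t₉, t₄t₅ + t₁t₈, t₁t₅, t₂t₅² − t₁²t₆)`. -/
def I : Ideal (MvPolynomial (Fin 9) ℂ) :=
  Ideal.span {X 4 * X 8, X 0 * X 8, X 3 * X 4 + X 0 * X 7, X 0 * X 4,
              X 1 * X 4 ^ 2 - X 0 ^ 2 * X 5}

def P₁ : Ideal (MvPolynomial (Fin 9) ℂ) := Ideal.span {X 4, X 0}
def P₂ : Ideal (MvPolynomial (Fin 9) ℂ) := Ideal.span {X 8, X 4, X 7, X 5}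
def P₃ : Ideal (MvPolynomial (Fin 9) ℂ) := Ideal.span {X 8, X 0, X 3, X 1}

/-- Generic kernel description for spans of variables. -/
lemma mem_span_X_iff (S : Set (Fin 9)) (σ : Fin 9 → MvPolynomial (Fin 9) ℂ)
    (h0 : ∀ i ∈ S, σ i = 0) (h1 : ∀ i ∉ S, σ i = X i) (p : MvPolynomial (Fin 9) ℂ) :
    p ∈ Ideal.span (MvPolynomial.X '' S) ↔ aeval σ p = 0 := by
  constructor
  · intro hp
    have hle : Ideal.span (MvPolynomial.X '' S) ≤
        RingHom.ker (aeval σ : MvPolynomial (Fin 9) ℂ →ₐ[ℂ] MvPolynomial (Fin 9) ℂ) := by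
      rw [Ideal.span_le]
      rintro q ⟨i, hi, rfl⟩
      simp [RingHom.mem_ker, h0 i hi]
    simpa [RingHom.mem_ker] using hle hp
  · intro hp
    have key : ∀ q : MvPolynomial (Fin 9) ℂ,
        q - aeval σ q ∈ Ideal.span (MvPolynomial.X '' S) := by
      intro q
      induction q using MvPolynomial.induction_on with
      | C a => simp
      | add q r hq hr =>
          have h := Ideal.add_mem _ hq hr
          have : q + r - aeval σ (q + r) = q - aeval σ q + (r - aeval σ r) := by
            rw [map_add]; ring
          rw [this]; exact h
      | mul_X q i hq =>
          by_cases hi : i ∈ S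
          · have : q * X i - aeval σ (q * X i) = q * X i := by
              rw [map_mul, aeval_X, h0 i hi, mul_zero, sub_zero]
            rw [this]
            exact Ideal.mul_mem_left _ q (Ideal.subset_span ⟨i, hi, rfl⟩)
          · have : q * X i - aeval σ (q * X i) = (q - aeval σ q) * X i := by
              rw [map_mul, aeval_X, h1 i hi]; ring
            rw [this]
            exact Ideal.mul_mem_right _ _ hq
    have := key p
    rwa [hp, sub_zero] at this

lemma isPrime_span_X (S : Set (Fin 9)) (σ : Fin 9 → MvPolynomial (Fin 9) ℂ)
    (h0 : ∀ i ∈ S, σ i = 0) (h1 : ∀ i ∉ S, σ i = X i) :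
    (Ideal.span (MvPolynomial.X '' S) : Ideal (MvPolynomial (Fin 9) ℂ)).IsPrime := by
  constructor
  · intro h
    have h1mem : (1 : MvPolynomial (Fin 9) ℂ) ∈ Ideal.span (MvPolynomial.X '' S) := by
      rw [h]; exact Submodule.mem_top
    have := (mem_span_X_iff S σ h0 h1 1).1 h1mem
    simp at this
  · intro p q hpq
    rw [mem_span_X_iff S σ h0 h1] at hpq ⊢
    rw [mem_span_X_iff S σ h0 h1]
    rw [map_mul] at hpq
    exact mul_eq_zero.mp hpq

def σ₁ : Fin 9 → MvPolynomial (Fin 9) ℂ := fun i => if i = 4 ∨ i = 0 then 0 else X i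
def σ₂ : Fin 9 → MvPolynomial (Fin 9) ℂ :=
  fun i => if i = 8 ∨ i = 4 ∨ i = 7 ∨ i = 5 then 0 else X i
def σ₃ : Fin 9 → MvPolynomial (Fin 9) ℂ :=
  fun i => if i = 8 ∨ i = 0 ∨ i = 3 ∨ i = 1 then 0 else X i

lemma P₁_eq : P₁ = Ideal.span (MvPolynomial.X '' ({4, 0} : Set (Fin 9))) := by
  rw [P₁, Set.image_insert_eq, Set.image_singleton]

lemma P₂_eq : P₂ = Ideal.span (MvPolynomial.X '' ({8, 4, 7, 5} : Set (Fin 9))) := by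
  rw [P₂]; congr 1; simp [Set.image_insert_eq]

lemma P₃_eq : P₃ = Ideal.span (MvPolynomial.X '' ({8, 0, 3, 1} : Set (Fin 9))) := by
  rw [P₃]; congr 1; simp [Set.image_insert_eq]

lemma σ₁_spec : (∀ i ∈ ({4, 0} : Set (Fin 9)), σ₁ i = 0) ∧
    (∀ i ∉ ({4, 0} : Set (Fin 9)), σ₁ i = X i) := by
  constructor
  · intro i hi; simp only [Set.mem_insert_iff, Set.mem_singleton_iff] at hi
    rcases hi with rfl | rfl <;> simp [σ₁]
  · intro i hi; simp only [Set.mem_insert_iff, Set.mem_singleton_iff] at hi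
    simp only [σ₁]; exact if_neg hi

lemma σ₂_spec : (∀ i ∈ ({8, 4, 7, 5} : Set (Fin 9)), σ₂ i = 0) ∧
    (∀ i ∉ ({8, 4, 7, 5} : Set (Fin 9)), σ₂ i = X i) := by
  constructor
  · intro i hi; simp only [Set.mem_insert_iff, Set.mem_singleton_iff] at hi
    rcases hi with rfl | rfl | rfl | rfl <;> simp [σ₂]
  · intro i hi; simp only [Set.mem_insert_iff, Set.mem_singleton_iff] at hi
    simp only [σ₂]; exact if_neg hi

lemma σ₃_spec : (∀ i ∈ ({8, 0, 3, 1} : Set (Fin 9)), σ₃ i = 0) ∧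
    (∀ i ∉ ({8, 0, 3, 1} : Set (Fin 9)), σ₃ i = X i) := by
  constructor
  · intro i hi; simp only [Set.mem_insert_iff, Set.mem_singleton_iff] at hi
    rcases hi with rfl | rfl | rfl | rfl <;> simp [σ₃]
  · intro i hi; simp only [Set.mem_insert_iff, Set.mem_singleton_iff] at hi
    simp only [σ₃]; exact if_neg hi

lemma memrad {e m : MvPolynomial (Fin 9) ℂ} (he : e ∈ I.radical)
    (c : MvPolynomial (Fin 9) ℂ) (h : m = c * e) : m ∈ I.radical :=
  h ▸ Ideal.mul_mem_left _ c he

/-- The radical of `I` is the intersection of the three prime ideals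
`P₁ = (t₅,t₁)`, `P₂ = (t₉,t₅,t₈,t₆)`, `P₃ = (t₉,t₁,t₄,t₂)`. -/
theorem radical_eq_inter_of_three_primes :
    I.radical = P₁ ⊓ P₂ ⊓ P₃ ∧ P₁.IsPrime ∧ P₂.IsPrime ∧ P₃.IsPrime := by
  have hp1 : P₁.IsPrime := P₁_eq ▸ isPrime_span_X _ σ₁ σ₁_spec.1 σ₁_spec.2
  have hp2 : P₂.IsPrime := P₂_eq ▸ isPrime_span_X _ σ₂ σ₂_spec.1 σ₂_spec.2
  have hp3 : P₃.IsPrime := P₃_eq ▸ isPrime_span_X _ σ₃ σ₃_spec.1 σ₃_spec.2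
  refine ⟨le_antisymm ?_ ?_, hp1, hp2, hp3⟩
  · -- I.radical ≤ P₁ ⊓ P₂ ⊓ P₃
    have hIP : ∀ (P : Ideal (MvPolynomial (Fin 9) ℂ)), P.IsPrime → I ≤ P → I.radical ≤ P := by
      intro P hP hle
      calc I.radical ≤ P.radical := Ideal.radical_mono hle
        _ = P := hP.radical
    have h1 : I ≤ P₁ := by
      rw [I, P₁_eq, Ideal.span_le]
      intro q hq
      rw [SetLike.mem_coe, mem_span_X_iff _ σ₁ σ₁_spec.1 σ₁_spec.2]
      simp only [Set.mem_insert_iff, Set.mem_singleton_iff] at hq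
      rcases hq with rfl | rfl | rfl | rfl | rfl <;> simp [σ₁]
    have h2 : I ≤ P₂ := by
      rw [I, P₂_eq, Ideal.span_le]
      intro q hq
      rw [SetLike.mem_coe, mem_span_X_iff _ σ₂ σ₂_spec.1 σ₂_spec.2]
      simp only [Set.mem_insert_iff, Set.mem_singleton_iff] at hq
      rcases hq with rfl | rfl | rfl | rfl | rfl <;> simp [σ₂]
    have h3 : I ≤ P₃ := by
      rw [I, P₃_eq, Ideal.span_le]
      intro q hq
      rw [SetLike.mem_coe, mem_span_X_iff _ σ₃ σ₃_spec.1 σ₃_spec.2]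
      simp only [Set.mem_insert_iff, Set.mem_singleton_iff] at hq
      rcases hq with rfl | rfl | rfl | rfl | rfl <;> simp [σ₃]
    exact le_inf (le_inf (hIP _ hp1 h1) (hIP _ hp2 h2)) (hIP _ hp3 h3)
  · -- P₁ ⊓ P₂ ⊓ P₃ ≤ I.radical
    -- seven elements of the radical
    have g1 : X 4 * X 8 ∈ I := Ideal.subset_span (by simp)
    have g2 : X 0 * X 8 ∈ I := Ideal.subset_span (by simp)
    have g3 : X 3 * X 4 + X 0 * X 7 ∈ I := Ideal.subset_span (by simp)
    have g4 : X 0 * X 4 ∈ I := Ideal.subset_span (by simp)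
    have g5 : X 1 * X 4 ^ 2 - X 0 ^ 2 * X 5 ∈ I := Ideal.subset_span (by simp)
    have h59 : X 4 * X 8 ∈ I.radical := I.le_radical g1
    have h19 : X 0 * X 8 ∈ I.radical := I.le_radical g2
    have h15 : X 0 * X 4 ∈ I.radical := I.le_radical g4
    have h45 : X 3 * X 4 ∈ I.radical := by
      rw [Ideal.mem_radical_iff]
      refine ⟨2, ?_⟩
      have : (X 3 * X 4 : MvPolynomial (Fin 9) ℂ) ^ 2 =
          (X 3 * X 4) * (X 3 * X 4 + X 0 * X 7) - (X 3 * X 7) * (X 0 * X 4) := by ring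
      rw [this]
      exact Ideal.sub_mem _ (Ideal.mul_mem_left _ _ g3) (Ideal.mul_mem_left _ _ g4)
    have h18 : X 0 * X 7 ∈ I.radical := by
      rw [Ideal.mem_radical_iff]
      refine ⟨2, ?_⟩
      have : (X 0 * X 7 : MvPolynomial (Fin 9) ℂ) ^ 2 =
          (X 0 * X 7) * (X 3 * X 4 + X 0 * X 7) - (X 3 * X 7) * (X 0 * X 4) := by ring
      rw [this]
      exact Ideal.sub_mem _ (Ideal.mul_mem_left _ _ g3) (Ideal.mul_mem_left _ _ g4)
    have h25 : X 1 * X 4 ∈ I.radical := by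
      rw [Ideal.mem_radical_iff]
      refine ⟨3, ?_⟩
      have : (X 1 * X 4 : MvPolynomial (Fin 9) ℂ) ^ 3 =
          (X 1 ^ 2 * X 4) * (X 1 * X 4 ^ 2 - X 0 ^ 2 * X 5) +
            (X 0 * X 1 ^ 2 * X 5) * (X 0 * X 4) := by ring
      rw [this]
      exact Ideal.add_mem _ (Ideal.mul_mem_left _ _ g5) (Ideal.mul_mem_left _ _ g4)
    have h16 : X 0 * X 5 ∈ I.radical := by
      rw [Ideal.mem_radical_iff]
      refine ⟨3, ?_⟩
      have : (X 0 * X 5 : MvPolynomial (Fin 9) ℂ) ^ 3 =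
          (X 1 * X 4 * X 5 ^ 2) * (X 0 * X 4) -
            (X 0 * X 5 ^ 2) * (X 1 * X 4 ^ 2 - X 0 ^ 2 * X 5) := by ring
      rw [this]
      exact Ideal.sub_mem _ (Ideal.mul_mem_left _ _ g4) (Ideal.mul_mem_left _ _ g5)
    have hprod : P₁ * P₂ * P₃ ≤ I.radical := by
      rw [P₁, P₂, P₃, Ideal.span_mul_span, Ideal.span_mul_span, Ideal.span_le]
      intro p hp
      simp only [Set.mem_mul, Set.mem_insert_iff, Set.mem_singleton_iff] at hp
      obtain ⟨a, ha, c, hc, rfl⟩ := hp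
      obtain ⟨x, hx, y, hy, rfl⟩ := ha
      rcases hx with rfl | rfl <;> rcases hy with rfl | rfl | rfl | rfl <;>
        rcases hc with rfl | rfl | rfl | rfl
      · exact memrad h59 (X 8) (by ring)
      · exact memrad h59 (X 0) (by ring)
      · exact memrad h59 (X 3) (by ring)
      · exact memrad h59 (X 1) (by ring)
      · exact memrad h59 (X 4) (by ring)
      · exact memrad h15 (X 4) (by ring)
      · exact memrad h45 (X 4) (by ring)
      · exact memrad h25 (X 4) (by ring)
      · exact memrad h59 (X 7) (by ring)
      · exact memrad h18 (X 4) (by ring)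
      · exact memrad h45 (X 7) (by ring)
      · exact memrad h25 (X 7) (by ring)
      · exact memrad h59 (X 5) (by ring)
      · exact memrad h16 (X 4) (by ring)
      · exact memrad h45 (X 5) (by ring)
      · exact memrad h25 (X 5) (by ring)
      · exact memrad h19 (X 8) (by ring)
      · exact memrad h19 (X 0) (by ring)
      · exact memrad h19 (X 3) (by ring)
      · exact memrad h19 (X 1) (by ring)
      · exact memrad h15 (X 8) (by ring)
      · exact memrad h15 (X 0) (by ring)
      · exact memrad h15 (X 3) (by ring)
      · exact memrad h15 (X 1) (by ring)
      · exact memrad h18 (X 8) (by ring)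
      · exact memrad h18 (X 0) (by ring)
      · exact memrad h18 (X 3) (by ring)
      · exact memrad h18 (X 1) (by ring)
      · exact memrad h16 (X 8) (by ring)
      · exact memrad h16 (X 0) (by ring)
      · exact memrad h16 (X 3) (by ring)
      · exact memrad h16 (X 1) (by ring)
    intro x hx
    obtain ⟨⟨hx1, hx2⟩, hx3⟩ := hx
    have hcube : x ^ 3 ∈ P₁ * P₂ * P₃ := by
      have : x ^ 3 = x * x * x := by ring
      rw [this]
      exact Ideal.mul_mem_mul (Ideal.mul_mem_mul hx1 hx2) hx3
    have hx3rad : x ^ 3 ∈ I.radical := hprod hcube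
    rw [Ideal.mem_radical_iff] at hx3rad ⊢
    obtain ⟨n, hn⟩ := hx3rad
    exact ⟨3 * n, by rwa [pow_mul]⟩
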